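/- Corollary 2.1(b) (band-limited window). Fix t ∈ ℝ. Suppose x ∈ 𝓑_{ε1,ε2}, supp(ĝ) ⊆ [−α, α], the separation condition σ(t) ≥ 2α/(φ'_k(t) − φ'_{k−1}(t)) holds for all t and k = 1,…,K, and 2M(t)λ_0(t) ≤ μ(t). Let ε̃1 satisfy M(t)λ_0(t) ≤ ε̃1 ≤ μ(t) − M(t)λ_0(t), and for 1 ≤ ℓ ≤ K let η̂_ℓ(t) = argmax_{η ∈ 𝓖_{t,ℓ}} |Ṽ_x(t,η)|. Then for each ℓ = 1,…,K, |η̂_ℓ(t) − φ'_ℓ(t)| ≤ (1/σ(t)) · |ĝ|^{−1}(1 − 2 M(t)λ_0(t)/A_ℓ(t)). -/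

import Mathlib

open MeasureTheory Real

noncomputable section

/-- The adaptive short-time Fourier transform with time-varying window width `σ`. -/
def aSTFT (x : ℝ → ℂ) (g : ℝ → ℝ) (σ : ℝ → ℝ) (t η : ℝ) : ℂ :=
  ∫ τ : ℝ, x (t + τ) * (((σ t)⁻¹ * g (τ / σ t) : ℝ) : ℂ) *
    Complex.exp (-(2 * (π : ℂ) * η * τ) * Complex.I)

/-- The Fourier transform `ĝ` of the window `g`. -/
def hatg (g : ℝ → ℝ) (ξ : ℝ) : ℂ :=
  ∫ τ : ℝ, (g τ : ℂ) * Complex.exp (-(2 * (π : ℂ) * ξ * τ) * Complex.I)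

/-- The absolute moments `I_n = ∫ |τ^n g(τ)| dτ` of the window. -/
def momentI (g : ℝ → ℝ) (n : ℕ) : ℝ := ∫ τ : ℝ, |τ| ^ n * |g τ|

/-- The `k`-th component `x_k(s) = A_k(s) e^{2πi φ_k(s)}`. -/
def xcomp (A φ : ℕ → ℝ → ℝ) (k : ℕ) (s : ℝ) : ℂ :=
  (A k s : ℂ) * Complex.exp ((2 * (π : ℂ) * φ k s) * Complex.I)

/-- `M(t) = Σ_{k=0}^K A_k(t)`. -/
def Msum (K : ℕ) (A : ℕ → ℝ → ℝ) (t : ℝ) : ℝ := ∑ k ∈ Finset.range (K + 1), A k t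

/-- `μ(t) = min_{0 ≤ k ≤ K} A_k(t)`. -/
def muMin (K : ℕ) (A : ℕ → ℝ → ℝ) (t : ℝ) : ℝ :=
  (Finset.range (K + 1)).inf' (by simp) fun k => A k t

/-- `λ_0(t) = ε1 I_1 σ(t) + π ε2 I_2 σ(t)²`. -/
def lam0 (g : ℝ → ℝ) (σ : ℝ → ℝ) (ε1 ε2 t : ℝ) : ℝ :=
  ε1 * momentI g 1 * σ t + π * ε2 * momentI g 2 * σ t ^ 2

/-- `err_ℓ(t) = M(t)λ_0(t) + Σ_{k≠ℓ} A_k(t) |ĝ(α(2|ℓ−k|−1))|`. -/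
def errl (K : ℕ) (A : ℕ → ℝ → ℝ) (g : ℝ → ℝ) (σ : ℝ → ℝ) (α ε1 ε2 : ℝ)
    (l : ℕ) (t : ℝ) : ℝ :=
  Msum K A t * lam0 g σ ε1 ε2 t +
    ∑ k ∈ (Finset.range (K + 1)).erase l,
      A k t * ‖hatg g (α * (2 * |(l : ℝ) - (k : ℝ)| - 1))‖

/-- `𝓖_t = {η : |Ṽ_x(t,η)| > ε̃1}`. -/
def Gt (x : ℝ → ℂ) (g : ℝ → ℝ) (σ : ℝ → ℝ) (t eps : ℝ) : Set ℝ :=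
  {η | eps < ‖aSTFT x g σ t η‖}

/-- `𝓖_{t,k} = {η ∈ 𝓖_t : |η − φ'_k(t)| < α/σ(t)}`. -/
def Gtk (x : ℝ → ℂ) (g : ℝ → ℝ) (σ : ℝ → ℝ) (φ : ℕ → ℝ → ℝ) (α t eps : ℝ)
    (k : ℕ) : Set ℝ :=
  {η | η ∈ Gt x g σ t eps ∧ |η - deriv (φ k) t| < α / σ t}

lemma norm_exp_real_mul_I (r : ℝ) : ‖Complex.exp ((r:ℂ) * Complex.I)‖ = 1 := by
  simp [Complex.norm_exp_ofReal_mul_I]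

lemma norm_exp_neg (η τ : ℝ) : ‖Complex.exp (-(2 * (π:ℂ) * η * τ) * Complex.I)‖ = 1 := by
  rw [show -(2 * (π:ℂ) * η * τ) = ((-(2*π*η*τ) : ℝ) : ℂ) by push_cast; ring]
  exact norm_exp_real_mul_I _

lemma hatg_continuous {g : ℝ → ℝ} (hg : Integrable g) : Continuous (hatg g) := by
  apply continuous_of_dominated (bound := fun τ => |g τ|)
  · intro ξ
    exact (Complex.continuous_ofReal.comp_aestronglyMeasurable hg.aestronglyMeasurable).mul
      (Continuous.aestronglyMeasurable (by fun_prop))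
  · intro ξ
    filter_upwards with τ
    rw [norm_mul, norm_exp_neg]
    simp
  · exact hg.abs
  · filter_upwards with τ
    fun_prop

lemma hatg_zero {g : ℝ → ℝ} (h : (∫ τ : ℝ, g τ) = 1) : hatg g 0 = 1 := by
  rw [hatg]
  simp only [mul_zero, zero_mul, mul_comm, Complex.exp_zero]
  norm_num
  have : ∫ (τ : ℝ), ((g τ : ℝ) : ℂ) = ((∫ (τ : ℝ), g τ : ℝ) : ℂ) :=
    integral_ofReal (𝕜 := ℂ)
  rw [this, h]
  norm_num

lemma hatg_at_beta {g : ℝ → ℝ} (hg : Integrable g) {β : ℝ} (hβ : 0 < β)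
    (hsupp : ∀ ξ, β < |ξ| → hatg g ξ = 0) : hatg g β = 0 := by
  have h1 : Filter.Tendsto (hatg g) (nhdsWithin β (Set.Ioi β)) (nhds (hatg g β)) :=
    ((hatg_continuous hg).tendsto β).mono_left nhdsWithin_le_nhds
  have h2 : Filter.Tendsto (hatg g) (nhdsWithin β (Set.Ioi β)) (nhds 0) := by
    apply Filter.Tendsto.congr' _ tendsto_const_nhds
    filter_upwards [self_mem_nhdsWithin] with ξ hξ
    exact (hsupp ξ (by rw [abs_of_pos (hβ.trans hξ)]; exact hξ)).symm
  exact tendsto_nhds_unique h1 h2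

lemma exp_I_lip (a b : ℝ) :
    ‖Complex.exp ((a:ℂ) * Complex.I) - Complex.exp ((b:ℂ) * Complex.I)‖ ≤ |a - b| := by
  have hd : ∀ θ : ℝ, HasDerivAt (fun u : ℝ => Complex.exp ((u:ℂ) * Complex.I))
      (Complex.exp ((θ:ℂ) * Complex.I) * Complex.I) θ := by
    intro θ
    have h1 : HasDerivAt (fun u : ℝ => (u : ℂ) * Complex.I) Complex.I θ := by
      simpa using (Complex.ofRealCLM.hasDerivAt (x := θ)).mul_const Complex.I
    simpa using h1.cexp
  have := Convex.norm_image_sub_le_of_norm_deriv_le (s := Set.univ) (C := 1)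
    (f := fun u : ℝ => Complex.exp ((u:ℂ) * Complex.I))
    (fun x _ => (hd x).differentiableAt)
    (fun x _ => by rw [(hd x).deriv]; simp [norm_exp_real_mul_I]) convex_univ
    (Set.mem_univ b) (Set.mem_univ a)
  simpa [Real.norm_eq_abs] using this

lemma deriv_lip {φ : ℝ → ℝ} {ε2 : ℝ} (hφ : ContDiff ℝ 2 φ)
    (hφ'' : ∀ s, |deriv (deriv φ) s| ≤ ε2) (u v : ℝ) :
    |deriv φ u - deriv φ v| ≤ ε2 * |u - v| := by
  have h2 : ContDiff ℝ ((1 : ℕ) + 1) φ := by exact_mod_cast hφ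
  have hφ' : ContDiff ℝ (1 : ℕ) (deriv φ) := (contDiff_succ_iff_deriv.mp h2).2.2
  have hdiff' : Differentiable ℝ (deriv φ) := hφ'.differentiable (by norm_num)
  have := Convex.norm_image_sub_le_of_norm_deriv_le (f := deriv φ) (s := Set.univ)
    (fun x _ => hdiff' x) (fun x _ => by simpa [Real.norm_eq_abs] using hφ'' x)
    convex_univ (Set.mem_univ v) (Set.mem_univ u)
  simpa [Real.norm_eq_abs] using this

lemma taylor_bd {φ : ℝ → ℝ} {ε2 : ℝ} (hφ : ContDiff ℝ 2 φ)
    (hφ'' : ∀ s, |deriv (deriv φ) s| ≤ ε2) (t τ : ℝ) :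
    |φ (t + τ) - φ t - deriv φ t * τ| ≤ ε2 * τ ^ 2 / 2 := by
  have hdiff : Differentiable ℝ φ := hφ.differentiable (by norm_num)
  set ψ : ℝ → ℝ := fun u => φ (t + u * τ) - (φ t + deriv φ t * (u * τ)) with hψdef
  have hψd : ∀ u : ℝ, HasDerivAt ψ ((deriv φ (t + u * τ) - deriv φ t) * τ) u := by
    intro u
    have h1 : HasDerivAt (fun u : ℝ => t + u * τ) τ u := by
      simpa using ((hasDerivAt_id u).mul_const τ).const_add t
    have h2 : HasDerivAt (fun u : ℝ => φ (t + u * τ)) (deriv φ (t + u * τ) * τ) u :=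
      (hdiff (t + u * τ)).hasDerivAt.comp u h1
    have h3 : HasDerivAt (fun u : ℝ => φ t + deriv φ t * (u * τ)) (deriv φ t * τ) u := by
      simpa [mul_assoc] using (((hasDerivAt_id u).mul_const τ).const_mul (deriv φ t)).const_add (φ t)
    exact (h2.sub h3).congr_deriv (by ring)
  have hc : ContinuousOn ψ (Set.Icc (0:ℝ) 1) :=
    fun u _ => (hψd u).continuousAt.continuousWithinAt
  have hd : ∀ u ∈ Set.Ico (0:ℝ) 1,
      HasDerivWithinAt ψ ((deriv φ (t + u * τ) - deriv φ t) * τ) (Set.Ici u) u :=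
    fun u _ => (hψd u).hasDerivWithinAt
  have ha : ‖ψ 0‖ ≤ ε2 * τ ^ 2 / 2 * 0 ^ 2 := by simp [hψdef]
  have hB : ∀ u : ℝ, HasDerivAt (fun u : ℝ => ε2 * τ ^ 2 / 2 * u ^ 2)
      (ε2 * τ ^ 2 / 2 * (2 * u)) u := by
    intro u
    simpa using ((hasDerivAt_pow 2 u).const_mul (ε2 * τ ^ 2 / 2))
  have hbound : ∀ u ∈ Set.Ico (0:ℝ) 1,
      ‖(deriv φ (t + u * τ) - deriv φ t) * τ‖ ≤ ε2 * τ ^ 2 / 2 * (2 * u) := by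
    intro u hu
    have h1 : |deriv φ (t + u * τ) - deriv φ t| ≤ ε2 * |u * τ| := by
      simpa using deriv_lip hφ hφ'' (t + u * τ) t
    calc ‖(deriv φ (t + u * τ) - deriv φ t) * τ‖
        = |deriv φ (t + u * τ) - deriv φ t| * |τ| := by rw [Real.norm_eq_abs, abs_mul]
      _ ≤ (ε2 * |u * τ|) * |τ| := mul_le_mul_of_nonneg_right h1 (abs_nonneg _)
      _ = ε2 * u * (|τ| * |τ|) := by rw [abs_mul, abs_of_nonneg hu.1]; ring
      _ = ε2 * τ ^ 2 / 2 * (2 * u) := by rw [abs_mul_abs_self]; ring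
  have key := image_norm_le_of_norm_deriv_right_le_deriv_boundary hc hd ha hB hbound
    (Set.mem_Icc.mpr ⟨by norm_num, le_rfl⟩)
  have hψ1 : ψ 1 = φ (t + τ) - φ t - deriv φ t * τ := by
    simp only [hψdef, one_mul]; ring
  rw [hψ1] at key
  simpa [Real.norm_eq_abs] using key

lemma norm_exp_pos (r : ℝ) : ‖Complex.exp ((2 * (π:ℂ) * r) * Complex.I)‖ = 1 := by
  rw [show (2 * (π:ℂ) * r) = ((2*π*r : ℝ) : ℂ) by push_cast; ring]
  exact norm_exp_real_mul_I _


lemma comp_int_est {a : ℝ → ℝ} {φ : ℝ → ℝ} {ε1 ε2 : ℝ} {g : ℝ → ℝ}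
    (ha : Continuous a) (hφ : ContDiff ℝ 2 φ)
    (hapos : ∀ u, 0 < a u)
    (halip : ∀ u τ, |a (u + τ) - a u| ≤ ε1 * |τ| * a u)
    (hφ'' : ∀ u, |deriv (deriv φ) u| ≤ ε2)
    (hgint : Integrable g) (hgI1 : Integrable fun τ : ℝ => τ * g τ)
    (hgI2 : Integrable fun τ : ℝ => τ ^ 2 * g τ)
    (t η w : ℝ) (hw : 0 < w) (hε1 : 0 ≤ ε1) (hε2 : 0 ≤ ε2) :
    Integrable (fun τ : ℝ => ((a (t + τ) : ℂ) * Complex.exp ((2 * (π:ℂ) * φ (t + τ)) * Complex.I)) *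
        ((w⁻¹ * g (τ / w) : ℝ) : ℂ) * Complex.exp (-(2 * (π:ℂ) * η * τ) * Complex.I)) ∧
    ‖(∫ τ : ℝ, ((a (t + τ) : ℂ) * Complex.exp ((2 * (π:ℂ) * φ (t + τ)) * Complex.I)) *
          ((w⁻¹ * g (τ / w) : ℝ) : ℂ) * Complex.exp (-(2 * (π:ℂ) * η * τ) * Complex.I)) -
        (a t : ℂ) * Complex.exp ((2 * (π:ℂ) * φ t) * Complex.I) *
          hatg g (w * (η - deriv φ t))‖ ≤
      a t * (ε1 * momentI g 1 * w + π * ε2 * momentI g 2 * w ^ 2) := by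
  have hφc : Continuous φ := hφ.continuous
  have hwne : w ≠ 0 := hw.ne'
  have hwC : (w : ℂ) ≠ 0 := Complex.ofReal_ne_zero.mpr hwne
  -- basic integrable building blocks
  have G0 : Integrable (fun τ : ℝ => w⁻¹ * |g (τ / w)|) :=
    (hgint.abs.comp_div hwne).const_mul w⁻¹
  have G1 : Integrable (fun τ : ℝ => |τ| * (w⁻¹ * |g (τ / w)|)) := by
    have h1 : Integrable (fun τ : ℝ => |τ / w * g (τ / w)|) := (hgI1.abs).comp_div hwne
    refine h1.congr (Filter.EventuallyEq.of_eq (funext fun τ => ?_))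
    rw [abs_mul, abs_div, abs_of_pos hw]
    ring
  have G2 : Integrable (fun τ : ℝ => τ ^ 2 * (w⁻¹ * |g (τ / w)|)) := by
    have h2 : Integrable (fun τ : ℝ => |(τ / w) ^ 2 * g (τ / w)|) := (hgI2.abs).comp_div hwne
    refine (h2.const_mul w).congr (Filter.EventuallyEq.of_eq (funext fun τ => ?_))
    rw [abs_mul, abs_pow, abs_div, abs_of_pos hw]
    field_simp
    simp only [sq_abs]
  -- moment identities
  have J1 : (∫ τ : ℝ, |τ| * (w⁻¹ * |g (τ / w)|)) = w * momentI g 1 := by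
    have heq : (fun τ : ℝ => |τ| * (w⁻¹ * |g (τ / w)|)) =
        fun τ : ℝ => (fun u : ℝ => |u| * |g u|) (τ / w) := by
      funext τ
      simp only []
      rw [abs_div, abs_of_pos hw]
      ring
    rw [heq, MeasureTheory.Measure.integral_comp_div (fun u : ℝ => |u| * |g u|) w,
      abs_of_pos hw, smul_eq_mul, momentI]
    norm_num
  have J2 : (∫ τ : ℝ, τ ^ 2 * (w⁻¹ * |g (τ / w)|)) = w ^ 2 * momentI g 2 := by
    have heq : (fun τ : ℝ => τ ^ 2 * (w⁻¹ * |g (τ / w)|)) =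
        fun τ : ℝ => w * ((fun u : ℝ => |u| ^ 2 * |g u|) (τ / w)) := by
      funext τ
      simp only []
      rw [show |τ / w| ^ 2 = (τ/w)^2 by rw [sq_abs], div_pow]
      field_simp
    rw [heq, MeasureTheory.integral_const_mul,
      MeasureTheory.Measure.integral_comp_div (fun u : ℝ => |u| ^ 2 * |g u|) w,
      abs_of_pos hw, smul_eq_mul, momentI]
    ring
  -- measurability
  have hgm : AEStronglyMeasurable (fun τ : ℝ => ((w⁻¹ * g (τ / w) : ℝ) : ℂ)) volume :=
    Complex.continuous_ofReal.comp_aestronglyMeasurable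
      ((hgint.comp_div hwne).const_mul w⁻¹).aestronglyMeasurable
  have hac : Continuous (fun τ : ℝ => (a (t + τ) : ℂ) *
      Complex.exp ((2 * (π:ℂ) * φ (t + τ)) * Complex.I)) := by fun_prop
  have hec : Continuous (fun τ : ℝ => Complex.exp (-(2 * (π:ℂ) * η * τ) * Complex.I)) := by
    fun_prop
  have haesm : AEStronglyMeasurable (fun τ : ℝ =>
      ((a (t + τ) : ℂ) * Complex.exp ((2 * (π:ℂ) * φ (t + τ)) * Complex.I)) *
        ((w⁻¹ * g (τ / w) : ℝ) : ℂ) * Complex.exp (-(2 * (π:ℂ) * η * τ) * Complex.I)) volume :=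
    (hac.aestronglyMeasurable.mul hgm).mul hec.aestronglyMeasurable
  -- norm computation
  have hnormf : ∀ τ : ℝ, ‖((a (t + τ) : ℂ) * Complex.exp ((2 * (π:ℂ) * φ (t + τ)) * Complex.I)) *
      ((w⁻¹ * g (τ / w) : ℝ) : ℂ) * Complex.exp (-(2 * (π:ℂ) * η * τ) * Complex.I)‖ =
      a (t + τ) * (w⁻¹ * |g (τ / w)|) := by
    intro τ
    rw [norm_mul, norm_mul, norm_exp_neg, norm_mul, norm_exp_pos]
    rw [Complex.norm_real, Complex.norm_real]
    rw [Real.norm_eq_abs, Real.norm_eq_abs, abs_of_pos (hapos _), abs_mul,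
      abs_of_pos (inv_pos.mpr hw)]
    ring
  have habound : ∀ τ : ℝ, a (t + τ) ≤ a t * (1 + ε1 * |τ|) := by
    intro τ
    have := halip t τ
    have h2 := abs_sub_le_iff.mp this
    nlinarith [h2.1]
  have fint : Integrable (fun τ : ℝ =>
      ((a (t + τ) : ℂ) * Complex.exp ((2 * (π:ℂ) * φ (t + τ)) * Complex.I)) *
        ((w⁻¹ * g (τ / w) : ℝ) : ℂ) * Complex.exp (-(2 * (π:ℂ) * η * τ) * Complex.I)) := by
    refine Integrable.mono' ((G0.const_mul (a t)).add (G1.const_mul (a t * ε1))) haesm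
      (Filter.Eventually.of_forall fun τ => ?_)
    rw [hnormf τ]
    simp only [Pi.add_apply]
    have h0 : 0 ≤ w⁻¹ * |g (τ / w)| := by positivity
    have h1 := habound τ
    nlinarith [mul_le_mul_of_nonneg_right h1 h0]
  refine ⟨fint, ?_⟩
  set ν : ℝ := η - deriv φ t with hν
  have hexp : ∀ τ : ℝ, Complex.exp ((2 * (π:ℂ) * (φ t + deriv φ t * τ)) * Complex.I) *
      Complex.exp (-(2 * (π:ℂ) * η * τ) * Complex.I) =
      Complex.exp ((2 * (π:ℂ) * φ t) * Complex.I) *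
      Complex.exp (-(2 * (π:ℂ) * ((w * ν : ℝ) : ℂ) * ((τ / w : ℝ) : ℂ)) * Complex.I) := by
    intro τ
    rw [← Complex.exp_add, ← Complex.exp_add]
    congr 1
    push_cast [hν]
    field_simp
    ring
  have key : ∀ τ : ℝ, (a t : ℂ) * Complex.exp ((2 * (π:ℂ) * (φ t + deriv φ t * τ)) * Complex.I) *
      ((w⁻¹ * g (τ / w) : ℝ) : ℂ) * Complex.exp (-(2 * (π:ℂ) * η * τ) * Complex.I) =
      ((a t : ℂ) * Complex.exp ((2 * (π:ℂ) * φ t) * Complex.I) * ((w⁻¹ : ℝ) : ℂ)) *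
        ((g (τ / w) : ℂ) * Complex.exp (-(2 * (π:ℂ) * ((w * ν : ℝ) : ℂ) * ((τ / w : ℝ) : ℂ)) * Complex.I)) := by
    intro τ
    have h := hexp τ
    push_cast
    push_cast at h
    linear_combination ((a t : ℂ) * ((w : ℂ))⁻¹ * ((g (τ / w) : ℝ) : ℂ)) * h
  have Fint : Integrable (fun u : ℝ => (g u : ℂ) *
      Complex.exp (-(2 * (π:ℂ) * ((w * ν : ℝ) : ℂ) * u) * Complex.I)) := by
    refine Integrable.mono' hgint.abs
      ((Complex.continuous_ofReal.comp_aestronglyMeasurable hgint.aestronglyMeasurable).mul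
        (Continuous.aestronglyMeasurable (by fun_prop)))
      (Filter.Eventually.of_forall fun u => ?_)
    rw [norm_mul, norm_exp_neg, Complex.norm_real, Real.norm_eq_abs, mul_one]
  have hint : Integrable (fun τ : ℝ => (a t : ℂ) *
      Complex.exp ((2 * (π:ℂ) * (φ t + deriv φ t * τ)) * Complex.I) *
      ((w⁻¹ * g (τ / w) : ℝ) : ℂ) * Complex.exp (-(2 * (π:ℂ) * η * τ) * Complex.I)) :=
    ((Fint.comp_div hwne).const_mul _).congr
      (Filter.EventuallyEq.of_eq (funext fun τ => (key τ).symm))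
  have hI : (∫ τ : ℝ, (a t : ℂ) *
      Complex.exp ((2 * (π:ℂ) * (φ t + deriv φ t * τ)) * Complex.I) *
      ((w⁻¹ * g (τ / w) : ℝ) : ℂ) * Complex.exp (-(2 * (π:ℂ) * η * τ) * Complex.I)) =
      (a t : ℂ) * Complex.exp ((2 * (π:ℂ) * φ t) * Complex.I) * hatg g (w * ν) := by
    simp_rw [key]
    rw [MeasureTheory.integral_const_mul,
      MeasureTheory.Measure.integral_comp_div (fun u : ℝ => (g u : ℂ) *
        Complex.exp (-(2 * (π:ℂ) * ((w * ν : ℝ) : ℂ) * u) * Complex.I)) w]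
    rw [show (∫ u : ℝ, (g u : ℂ) * Complex.exp (-(2 * (π:ℂ) * ((w * ν : ℝ) : ℂ) * u) * Complex.I)) =
      hatg g (w * ν) from rfl]
    rw [abs_of_pos hw, Complex.real_smul, Complex.ofReal_inv]
    field_simp
  -- pointwise difference bound
  have hptwise : ∀ τ : ℝ, ‖(((a (t + τ) : ℂ) *
        Complex.exp ((2 * (π:ℂ) * φ (t + τ)) * Complex.I)) *
        ((w⁻¹ * g (τ / w) : ℝ) : ℂ) * Complex.exp (-(2 * (π:ℂ) * η * τ) * Complex.I)) -
      ((a t : ℂ) * Complex.exp ((2 * (π:ℂ) * (φ t + deriv φ t * τ)) * Complex.I) *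
        ((w⁻¹ * g (τ / w) : ℝ) : ℂ) * Complex.exp (-(2 * (π:ℂ) * η * τ) * Complex.I))‖ ≤
      a t * ε1 * (|τ| * (w⁻¹ * |g (τ / w)|)) +
        a t * (π * ε2) * (τ ^ 2 * (w⁻¹ * |g (τ / w)|)) := by
    intro τ
    have hfh : (((a (t + τ) : ℂ) * Complex.exp ((2 * (π:ℂ) * φ (t + τ)) * Complex.I)) *
        ((w⁻¹ * g (τ / w) : ℝ) : ℂ) * Complex.exp (-(2 * (π:ℂ) * η * τ) * Complex.I)) -
        ((a t : ℂ) * Complex.exp ((2 * (π:ℂ) * (φ t + deriv φ t * τ)) * Complex.I) *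
        ((w⁻¹ * g (τ / w) : ℝ) : ℂ) * Complex.exp (-(2 * (π:ℂ) * η * τ) * Complex.I)) =
        ((a (t + τ) : ℂ) * Complex.exp ((2 * (π:ℂ) * φ (t + τ)) * Complex.I) -
          (a t : ℂ) * Complex.exp ((2 * (π:ℂ) * (φ t + deriv φ t * τ)) * Complex.I)) *
        ((w⁻¹ * g (τ / w) : ℝ) : ℂ) * Complex.exp (-(2 * (π:ℂ) * η * τ) * Complex.I) := by
      ring
    rw [hfh, norm_mul, norm_mul, norm_exp_neg, mul_one, Complex.norm_real, Real.norm_eq_abs]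
    have hXY : ‖(a (t + τ) : ℂ) * Complex.exp ((2 * (π:ℂ) * φ (t + τ)) * Complex.I) -
        (a t : ℂ) * Complex.exp ((2 * (π:ℂ) * (φ t + deriv φ t * τ)) * Complex.I)‖ ≤
        a t * (ε1 * |τ| + π * ε2 * τ ^ 2) := by
      have hsplit : (a (t + τ) : ℂ) * Complex.exp ((2 * (π:ℂ) * φ (t + τ)) * Complex.I) -
          (a t : ℂ) * Complex.exp ((2 * (π:ℂ) * (φ t + deriv φ t * τ)) * Complex.I) =
          ((a (t + τ) - a t : ℝ) : ℂ) * Complex.exp ((2 * (π:ℂ) * φ (t + τ)) * Complex.I) +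
          (a t : ℂ) * (Complex.exp ((2 * (π:ℂ) * φ (t + τ)) * Complex.I) -
            Complex.exp ((2 * (π:ℂ) * (φ t + deriv φ t * τ)) * Complex.I)) := by
        push_cast
        ring
      have hlipE : ‖Complex.exp ((2 * (π:ℂ) * φ (t + τ)) * Complex.I) -
          Complex.exp ((2 * (π:ℂ) * (φ t + deriv φ t * τ)) * Complex.I)‖ ≤
          2 * π * |φ (t + τ) - φ t - deriv φ t * τ| := by
        have h1 := exp_I_lip (2 * π * φ (t + τ)) (2 * π * (φ t + deriv φ t * τ))
        rw [show ((2 * π * φ (t + τ) : ℝ) : ℂ) = 2 * (π:ℂ) * φ (t + τ) by push_cast; ring,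
          show ((2 * π * (φ t + deriv φ t * τ) : ℝ) : ℂ) =
            2 * (π:ℂ) * (φ t + deriv φ t * τ) by push_cast; ring] at h1
        refine h1.trans (le_of_eq ?_)
        rw [show 2 * π * φ (t + τ) - 2 * π * (φ t + deriv φ t * τ) =
          2 * π * (φ (t + τ) - φ t - deriv φ t * τ) by ring, abs_mul, abs_of_pos (by positivity)]
      have htay : |φ (t + τ) - φ t - deriv φ t * τ| ≤ ε2 * τ ^ 2 / 2 := taylor_bd hφ hφ'' t τ
      calc ‖(a (t + τ) : ℂ) * Complex.exp ((2 * (π:ℂ) * φ (t + τ)) * Complex.I) -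
            (a t : ℂ) * Complex.exp ((2 * (π:ℂ) * (φ t + deriv φ t * τ)) * Complex.I)‖
          ≤ ‖((a (t + τ) - a t : ℝ) : ℂ) *
              Complex.exp ((2 * (π:ℂ) * φ (t + τ)) * Complex.I)‖ +
            ‖(a t : ℂ) * (Complex.exp ((2 * (π:ℂ) * φ (t + τ)) * Complex.I) -
              Complex.exp ((2 * (π:ℂ) * (φ t + deriv φ t * τ)) * Complex.I))‖ := by
            rw [hsplit]; exact norm_add_le _ _
        _ = |a (t + τ) - a t| + a t * ‖Complex.exp ((2 * (π:ℂ) * φ (t + τ)) * Complex.I) -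
              Complex.exp ((2 * (π:ℂ) * (φ t + deriv φ t * τ)) * Complex.I)‖ := by
            rw [norm_mul, norm_mul, norm_exp_pos, mul_one, Complex.norm_real, Real.norm_eq_abs,
              Complex.norm_real, Real.norm_eq_abs, abs_of_pos (hapos t)]
        _ ≤ ε1 * |τ| * a t + a t * (2 * π * (ε2 * τ ^ 2 / 2)) := by
            have h2 := halip t τ
            have h3 := hlipE.trans (by nlinarith [pi_pos] :
              2 * π * |φ (t + τ) - φ t - deriv φ t * τ| ≤ 2 * π * (ε2 * τ ^ 2 / 2))
            have := mul_le_mul_of_nonneg_left h3 (hapos t).le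
            linarith
        _ = a t * (ε1 * |τ| + π * ε2 * τ ^ 2) := by ring
    rw [abs_mul, abs_of_pos (inv_pos.mpr hw)]
    have hm : 0 ≤ w⁻¹ * |g (τ / w)| := by positivity
    nlinarith [mul_le_mul_of_nonneg_right hXY hm]
  have hsub := MeasureTheory.integral_sub fint hint
  rw [← hI, ← hsub]
  have boundint : Integrable (fun τ : ℝ => a t * ε1 * (|τ| * (w⁻¹ * |g (τ / w)|)) +
      a t * (π * ε2) * (τ ^ 2 * (w⁻¹ * |g (τ / w)|))) :=
    (G1.const_mul _).add (G2.const_mul _)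
  refine (MeasureTheory.norm_integral_le_integral_norm _).trans ?_
  refine (MeasureTheory.integral_mono_of_nonneg
    (Filter.Eventually.of_forall fun τ => norm_nonneg _) boundint
    (Filter.Eventually.of_forall fun τ => hptwise τ)).trans (le_of_eq ?_)
  rw [MeasureTheory.integral_add (G1.const_mul _) (G2.const_mul _),
    MeasureTheory.integral_const_mul, MeasureTheory.integral_const_mul, J1, J2]
  ring

lemma main_est (K : ℕ) (A φv : ℕ → ℝ → ℝ) (ε1 ε2 : ℝ) (x : ℝ → ℂ) (g σf : ℝ → ℝ) (t : ℝ)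
    (hε1 : 0 ≤ ε1) (hε2 : 0 ≤ ε2)
    (hAcont : ∀ k ≤ K, Continuous (A k))
    (hφreg : ∀ k ≤ K, ContDiff ℝ 2 (φv k))
    (hApos : ∀ k ≤ K, ∀ s, 0 < A k s)
    (hAlip : ∀ k ≤ K, ∀ s τ, |A k (s + τ) - A k s| ≤ ε1 * |τ| * A k s)
    (hφ'' : ∀ k ≤ K, ∀ s, |deriv (deriv (φv k)) s| ≤ ε2)
    (hx : ∀ s, x s = ∑ k ∈ Finset.range (K + 1), xcomp A φv k s)
    (hgint : Integrable g) (hgI1 : Integrable fun τ : ℝ => τ * g τ)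
    (hgI2 : Integrable fun τ : ℝ => τ ^ 2 * g τ)
    (hw : 0 < σf t) (l : ℕ) (hl : l ≤ K) (η : ℝ)
    (hvanish : ∀ k ≤ K, k ≠ l → hatg g (σf t * (η - deriv (φv k) t)) = 0) :
    ‖aSTFT x g σf t η - (A l t : ℂ) * Complex.exp ((2 * (π:ℂ) * φv l t) * Complex.I) *
        hatg g (σf t * (η - deriv (φv l) t))‖ ≤ Msum K A t * lam0 g σf ε1 ε2 t := by
  have hcomp := fun k (hk : k ≤ K) => comp_int_est (hAcont k hk) (hφreg k hk) (hApos k hk)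
    (hAlip k hk) (hφ'' k hk) hgint hgI1 hgI2 t η (σf t) hw hε1 hε2
  have hmem : ∀ k ∈ Finset.range (K + 1), k ≤ K := fun k hk =>
    Nat.lt_succ_iff.mp (Finset.mem_range.mp hk)
  have hsum : aSTFT x g σf t η = ∑ k ∈ Finset.range (K + 1),
      ∫ τ : ℝ, ((A k (t + τ) : ℂ) * Complex.exp ((2 * (π:ℂ) * φv k (t + τ)) * Complex.I)) *
        (((σf t)⁻¹ * g (τ / σf t) : ℝ) : ℂ) * Complex.exp (-(2 * (π:ℂ) * η * τ) * Complex.I) := by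
    rw [aSTFT, ← MeasureTheory.integral_finset_sum]
    · congr 1
      funext τ
      rw [hx (t + τ), Finset.sum_mul, Finset.sum_mul]
      refine Finset.sum_congr rfl fun k _ => ?_
      rw [xcomp]
    · intro k hk
      exact (hcomp k (hmem k hk)).1
  have hrlsum : (∑ k ∈ Finset.range (K + 1),
      (A k t : ℂ) * Complex.exp ((2 * (π:ℂ) * φv k t) * Complex.I) *
        hatg g (σf t * (η - deriv (φv k) t))) =
      (A l t : ℂ) * Complex.exp ((2 * (π:ℂ) * φv l t) * Complex.I) *
        hatg g (σf t * (η - deriv (φv l) t)) := by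
    refine Finset.sum_eq_single_of_mem l (Finset.mem_range.mpr (Nat.lt_succ_iff.mpr hl)) ?_
    intro k hk hkl
    rw [hvanish k (hmem k hk) hkl, mul_zero]
  calc ‖aSTFT x g σf t η - (A l t : ℂ) * Complex.exp ((2 * (π:ℂ) * φv l t) * Complex.I) *
        hatg g (σf t * (η - deriv (φv l) t))‖
      = ‖∑ k ∈ Finset.range (K + 1),
          ((∫ τ : ℝ, ((A k (t + τ) : ℂ) * Complex.exp ((2 * (π:ℂ) * φv k (t + τ)) * Complex.I)) *
            (((σf t)⁻¹ * g (τ / σf t) : ℝ) : ℂ) * Complex.exp (-(2 * (π:ℂ) * η * τ) * Complex.I)) -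
          (A k t : ℂ) * Complex.exp ((2 * (π:ℂ) * φv k t) * Complex.I) *
            hatg g (σf t * (η - deriv (φv k) t)))‖ := by
        rw [Finset.sum_sub_distrib, ← hsum, hrlsum]
    _ ≤ ∑ k ∈ Finset.range (K + 1),
          ‖(∫ τ : ℝ, ((A k (t + τ) : ℂ) * Complex.exp ((2 * (π:ℂ) * φv k (t + τ)) * Complex.I)) *
            (((σf t)⁻¹ * g (τ / σf t) : ℝ) : ℂ) * Complex.exp (-(2 * (π:ℂ) * η * τ) * Complex.I)) -
          (A k t : ℂ) * Complex.exp ((2 * (π:ℂ) * φv k t) * Complex.I) *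
            hatg g (σf t * (η - deriv (φv k) t))‖ := norm_sum_le _ _
    _ ≤ ∑ k ∈ Finset.range (K + 1), A k t * lam0 g σf ε1 ε2 t := by
        refine Finset.sum_le_sum fun k hk => ?_
        exact (hcomp k (hmem k hk)).2
    _ = Msum K A t * lam0 g σf ε1 ε2 t := by rw [Msum, Finset.sum_mul]

theorem cor2_1b (K : ℕ) (A φ : ℕ → ℝ → ℝ) (ε1 ε2 : ℝ) (x : ℝ → ℂ)
    (g : ℝ → ℝ) (σ : ℝ → ℝ) (α t epst : ℝ)
    (hε1 : 0 < ε1) (hε2 : 0 < ε2)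
    (hAreg : ∀ k ≤ K, ContDiff ℝ 1 (A k))
    (hAbdd : ∀ k ≤ K, ∃ C, ∀ s, |A k s| ≤ C)
    (hφreg : ∀ k ≤ K, ContDiff ℝ 2 (φ k))
    (hφ0 : ∀ s, φ 0 s = 0)
    (hApos : ∀ k ≤ K, ∀ s, 0 < A k s)
    (hφ'pos : ∀ k, 1 ≤ k → k ≤ K → ∃ c > 0, ∀ s, c ≤ deriv (φ k) s)
    (hφ'bdd : ∀ k, 1 ≤ k → k ≤ K → ∃ C, ∀ s, deriv (φ k) s ≤ C)
    (hfreq : ∃ d > 0, ∀ k, 2 ≤ k → k ≤ K → ∀ s, d ≤ deriv (φ k) s - deriv (φ (k - 1)) s)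
    (hAlip : ∀ k ≤ K, ∀ s τ, |A k (s + τ) - A k s| ≤ ε1 * |τ| * A k s)
    (hφ'' : ∀ k, 1 ≤ k → k ≤ K → ∀ s, |deriv (deriv (φ k)) s| ≤ ε2)
    (hx : ∀ s, x s = ∑ k ∈ Finset.range (K + 1), xcomp A φ k s)
    (hgint : Integrable g)
    (hgL2 : MemLp g 2 (volume : Measure ℝ))
    (hgI1 : Integrable fun τ : ℝ => τ * g τ)
    (hgI2 : Integrable fun τ : ℝ => τ ^ 2 * g τ)
    (hgnorm : (∫ τ : ℝ, g τ) = 1)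
    (β : ℝ) (hβ : 0 < β)
    (hgeven : ∀ ξ, ‖hatg g (-ξ)‖ = ‖hatg g ξ‖)
    (hgdecβ : ∀ ξ1 ξ2, 0 ≤ ξ1 → ξ1 ≤ ξ2 → ξ2 ≤ β → ‖hatg g ξ2‖ ≤ ‖hatg g ξ1‖)
    (hsuppβ : ∀ ξ, β < |ξ| → hatg g ξ = 0)
    (hα : 0 < α)
    (hsuppα : ∀ ξ, α < |ξ| → hatg g ξ = 0)
    (hσ : ∀ s, 0 < σ s)
    (hsep : ∀ s, ∀ k, 1 ≤ k → k ≤ K →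
      2 * α / (deriv (φ k) s - deriv (φ (k - 1)) s) ≤ σ s)
    (hmain : 2 * Msum K A t * lam0 g σ ε1 ε2 t ≤ muMin K A t)
    (heps1 : Msum K A t * lam0 g σ ε1 ε2 t ≤ epst)
    (heps2 : epst ≤ muMin K A t - Msum K A t * lam0 g σ ε1 ε2 t)
    (ginv : ℝ → ℝ)
    (hginvβ : ∀ ξ, 0 ≤ ξ → ξ ≤ β → ginv ‖hatg g ξ‖ = ξ)
    (ηhat : ℕ → ℝ)
    (hηmem : ∀ l, 1 ≤ l → l ≤ K → ηhat l ∈ Gtk x g σ φ α t epst l)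
    (hηmax : ∀ l, 1 ≤ l → l ≤ K → ∀ η ∈ Gtk x g σ φ α t epst l,
      ‖aSTFT x g σ t η‖ ≤ ‖aSTFT x g σ t (ηhat l)‖)
    :
    ∀ l, 1 ≤ l → l ≤ K →
      |ηhat l - deriv (φ l) t| ≤
        (σ t)⁻¹ * ginv (1 - 2 * Msum K A t * lam0 g σ ε1 ε2 t / A l t) := by
  intro l hl1 hlK
  have hw : 0 < σ t := hσ t
  -- second derivative bound for all k including 0
  have hφ0fun : φ 0 = fun _ => 0 := funext hφ0
  have hφ''all : ∀ k ≤ K, ∀ s, |deriv (deriv (φ k)) s| ≤ ε2 := by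
    intro k hk s
    rcases Nat.eq_zero_or_pos k with hk0 | hk1
    · subst hk0
      rw [hφ0fun]
      simp [deriv_const']
      exact hε2.le
    · exact hφ'' k hk1 hk s
  have hφ'0 : ∀ s, deriv (φ 0) s = 0 := by
    intro s; rw [hφ0fun]; simp
  -- separation steps
  obtain ⟨d, hd, hdfreq⟩ := hfreq
  have hstep : ∀ j, 1 ≤ j → j ≤ K →
      2 * α ≤ σ t * (deriv (φ j) t - deriv (φ (j - 1)) t) := by
    intro j hj1 hjK
    have hΔ : 0 < deriv (φ j) t - deriv (φ (j - 1)) t := by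
      rcases eq_or_lt_of_le hj1 with hj | hj
      · obtain ⟨c, hc, hcle⟩ := hφ'pos j hj1 hjK
        have : (j : ℕ) - 1 = 0 := by omega
        rw [this, hφ'0 t]
        have := hcle t
        linarith
      · have := hdfreq j (by omega) hjK t
        linarith
    have := hsep t j hj1 hjK
    rw [div_le_iff₀ hΔ] at this
    linarith [mul_comm (σ t) (deriv (φ j) t - deriv (φ (j - 1)) t)]
  have hchain : ∀ j, j ≤ K → ∀ k, k < j →
      2 * α ≤ σ t * (deriv (φ j) t - deriv (φ k) t) := by
    intro j
    induction j with
    | zero => intro _ k hk; omega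
    | succ j ih =>
      intro hjK k hk
      rcases Nat.lt_succ_iff_lt_or_eq.mp hk with hk' | hk'
      · have h1 := ih (by omega) k hk'
        have h2 := hstep (j + 1) (by omega) hjK
        have h3 : (j + 1 : ℕ) - 1 = j := by omega
        rw [h3] at h2
        have e : σ t * (deriv (φ (j + 1)) t - deriv (φ k) t) =
            σ t * (deriv (φ (j + 1)) t - deriv (φ j) t) +
            σ t * (deriv (φ j) t - deriv (φ k) t) := by ring
        linarith
      · have h2 := hstep (j + 1) (by omega) hjK
        have h3 : (j + 1 : ℕ) - 1 = j := by omega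
        rw [h3] at h2
        rw [hk']
        exact h2
  have habs : ∀ k, k ≤ K → k ≠ l →
      2 * α ≤ σ t * |deriv (φ l) t - deriv (φ k) t| := by
    intro k hkK hkl
    rcases lt_or_gt_of_ne hkl with hlt | hgt
    · have := hchain l hlK k hlt
      refine this.trans (mul_le_mul_of_nonneg_left (le_abs_self _) hw.le)
    · have := hchain k hkK l hgt
      refine this.trans (mul_le_mul_of_nonneg_left ?_ hw.le)
      rw [abs_sub_comm]
      exact le_abs_self _
  -- vanishing of other components in the band
  have hvan : ∀ η : ℝ, |η - deriv (φ l) t| < α / σ t →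
      ∀ k, k ≤ K → k ≠ l → hatg g (σ t * (η - deriv (φ k) t)) = 0 := by
    intro η hband k hkK hkl
    apply hsuppα
    have h1 : σ t * |η - deriv (φ l) t| < α := by
      rw [lt_div_iff₀ hw] at hband
      linarith [mul_comm (σ t) |η - deriv (φ l) t|]
    have h2 := habs k hkK hkl
    have he : σ t * (η - deriv (φ k) t) =
        σ t * (η - deriv (φ l) t) + σ t * (deriv (φ l) t - deriv (φ k) t) := by ring
    have h3 : |σ t * (deriv (φ l) t - deriv (φ k) t)| =
        σ t * |deriv (φ l) t - deriv (φ k) t| := by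
      rw [abs_mul, abs_of_pos hw]
    have h4 : |σ t * (η - deriv (φ l) t)| = σ t * |η - deriv (φ l) t| := by
      rw [abs_mul, abs_of_pos hw]
    have h5 : |σ t * (deriv (φ l) t - deriv (φ k) t)| ≤
        |σ t * (η - deriv (φ k) t)| + |σ t * (η - deriv (φ l) t)| := by
      rw [show σ t * (deriv (φ l) t - deriv (φ k) t) =
        σ t * (η - deriv (φ k) t) - σ t * (η - deriv (φ l) t) from by ring]
      exact abs_sub _ _
    rw [h3, h4] at h5
    linarith
  -- main estimate specialized
  have est : ∀ η : ℝ, |η - deriv (φ l) t| < α / σ t →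
      ‖aSTFT x g σ t η - (A l t : ℂ) * Complex.exp ((2 * (π:ℂ) * φ l t) * Complex.I) *
        hatg g (σ t * (η - deriv (φ l) t))‖ ≤ Msum K A t * lam0 g σ ε1 ε2 t := by
    intro η hband
    exact main_est K A φ ε1 ε2 x g σ t hε1.le hε2.le
      (fun k hk => (hAreg k hk).continuous) hφreg hApos hAlip hφ''all hx hgint hgI1 hgI2
      hw l hlK η (fun k hk hkl => hvan η hband k hk hkl)
  -- basic positivity
  have hAl : 0 < A l t := hApos l hlK t
  have hI1 : 0 ≤ momentI g 1 := integral_nonneg fun τ => by positivity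
  have hI2 : 0 ≤ momentI g 2 := integral_nonneg fun τ => by positivity
  have hlam : 0 ≤ lam0 g σ ε1 ε2 t := by
    rw [lam0]
    have := pi_pos
    have := (hσ t)
    positivity
  have hM : 0 < Msum K A t := by
    rw [Msum]
    exact Finset.sum_pos (fun k hk => hApos k (Nat.lt_succ_iff.mp (Finset.mem_range.mp hk)) t)
      ⟨0, Finset.mem_range.mpr (by omega)⟩
  have hmuAl : muMin K A t ≤ A l t :=
    Finset.inf'_le _ (Finset.mem_range.mpr (Nat.lt_succ_iff.mpr hlK))
  have hMl : 0 ≤ Msum K A t * lam0 g σ ε1 ε2 t := mul_nonneg hM.le hlam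
  -- membership data
  obtain ⟨hin, hband⟩ := hηmem l hl1 hlK
  have hin' : epst < ‖aSTFT x g σ t (ηhat l)‖ := hin
  -- norm of the reference term
  have hEnorm : ∀ ξ : ℝ, ‖(A l t : ℂ) * Complex.exp ((2 * (π:ℂ) * φ l t) * Complex.I) *
      hatg g ξ‖ = A l t * ‖hatg g ξ‖ := by
    intro ξ
    rw [norm_mul, norm_mul, norm_exp_pos, mul_one, Complex.norm_real, Real.norm_eq_abs,
      abs_of_pos hAl]
  -- lower bound for the max
  have hVlow : A l t - Msum K A t * lam0 g σ ε1 ε2 t ≤ ‖aSTFT x g σ t (ηhat l)‖ := by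
    by_contra hcon
    push_neg at hcon
    have hband0 : |deriv (φ l) t - deriv (φ l) t| < α / σ t := by
      rw [sub_self, abs_zero]
      positivity
    have h1 := est (deriv (φ l) t) hband0
    rw [sub_self, mul_zero, hatg_zero hgnorm, mul_one] at h1
    have h3 : ‖(A l t : ℂ) * Complex.exp ((2 * (π:ℂ) * φ l t) * Complex.I)‖ = A l t := by
      rw [norm_mul, norm_exp_pos, mul_one, Complex.norm_real, Real.norm_eq_abs, abs_of_pos hAl]
    have h4 := norm_sub_norm_le ((A l t : ℂ) * Complex.exp ((2 * (π:ℂ) * φ l t) * Complex.I))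
      (aSTFT x g σ t (deriv (φ l) t))
    rw [h3, norm_sub_rev] at h4
    have h2 : A l t - Msum K A t * lam0 g σ ε1 ε2 t ≤ ‖aSTFT x g σ t (deriv (φ l) t)‖ := by
      linarith
    have hmem0 : deriv (φ l) t ∈ Gtk x g σ φ α t epst l := by
      refine ⟨?_, hband0⟩
      show epst < ‖aSTFT x g σ t (deriv (φ l) t)‖
      calc epst < ‖aSTFT x g σ t (ηhat l)‖ := hin'
        _ < A l t - Msum K A t * lam0 g σ ε1 ε2 t := hcon
        _ ≤ ‖aSTFT x g σ t (deriv (φ l) t)‖ := h2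
    have := hηmax l hl1 hlK (deriv (φ l) t) hmem0
    linarith
  -- upper bound via the estimate at ηhat
  have h5 := est (ηhat l) hband
  set Δ : ℝ := ηhat l - deriv (φ l) t with hΔdef
  have h6 : ‖aSTFT x g σ t (ηhat l)‖ ≤ A l t * ‖hatg g (σ t * Δ)‖ +
      Msum K A t * lam0 g σ ε1 ε2 t := by
    have h7 := norm_sub_norm_le (aSTFT x g σ t (ηhat l))
      ((A l t : ℂ) * Complex.exp ((2 * (π:ℂ) * φ l t) * Complex.I) * hatg g (σ t * Δ))
    rw [hEnorm] at h7
    linarith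
  have hg2 : A l t - 2 * (Msum K A t * lam0 g σ ε1 ε2 t) ≤ A l t * ‖hatg g (σ t * Δ)‖ := by
    linarith
  have hgpos : 0 < ‖hatg g (σ t * Δ)‖ := by
    have h8 : 0 < A l t * ‖hatg g (σ t * Δ)‖ := by linarith
    by_contra hn
    push_neg at hn
    nlinarith
  have hwle : |σ t * Δ| ≤ β := by
    by_contra hcon2
    push_neg at hcon2
    rw [hsuppβ _ hcon2, norm_zero] at hgpos
    exact lt_irrefl 0 hgpos
  have hgabs : ‖hatg g |σ t * Δ|‖ = ‖hatg g (σ t * Δ)‖ := by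
    rcases abs_cases (σ t * Δ) with ⟨h9, _⟩ | ⟨h9, _⟩
    · rw [h9]
    · rw [h9, hgeven]
  set v : ℝ := 1 - 2 * Msum K A t * lam0 g σ ε1 ε2 t / A l t with hvdef
  have hv0 : 0 ≤ v := by
    rw [hvdef, sub_nonneg, div_le_one hAl]
    linarith
  have h10 : A l t * v = A l t - 2 * (Msum K A t * lam0 g σ ε1 ε2 t) := by
    rw [hvdef]
    field_simp
  have hvle : v ≤ ‖hatg g |σ t * Δ|‖ := by
    rw [hgabs]
    have h11 : A l t * v ≤ A l t * ‖hatg g (σ t * Δ)‖ := by rw [h10]; exact hg2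
    exact (mul_le_mul_iff_right₀ hAl).mp h11
  have hFcont : Continuous fun ξ => ‖hatg g ξ‖ := (hatg_continuous hgint).norm
  have hβ0 : hatg g β = 0 := hatg_at_beta hgint hβ hsuppβ
  have hivt := intermediate_value_Icc' hwle hFcont.continuousOn
  have hvmem : v ∈ Set.Icc (‖hatg g β‖) (‖hatg g |σ t * Δ|‖) := by
    constructor
    · rw [hβ0, norm_zero]; exact hv0
    · exact hvle
  obtain ⟨ξs, hξmem, hξval⟩ := hivt hvmem
  have hginv : ginv v = ξs := by
    rw [← hξval]
    exact hginvβ ξs (le_trans (abs_nonneg _) hξmem.1) hξmem.2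
  have h12 : |σ t * Δ| ≤ ξs := hξmem.1
  rw [abs_mul, abs_of_pos hw] at h12
  calc |Δ| = (σ t)⁻¹ * (σ t * |Δ|) := by field_simp
    _ ≤ (σ t)⁻¹ * ginv v := by
        rw [hginv]
        exact mul_le_mul_of_nonneg_left h12 (inv_pos.mpr hw).le
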